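/- arXiv:1606.03557 — 2 statements merged into one kernel-verified Lean document; each statement's English description precedes it below -/
import Mathlib

section
/- For every ρ ∈ (0,1] and natural number r ≤ N, there exists a set 𝒩 of r-sparse unit vectors in ℝ^N such that for every r-sparse unit vector x there is y ∈ 𝒩 with supp(y) ⊆ supp(x) and ‖x−y‖ ≤ ρ, and |𝒩| ≤ (C N/(ρ r))^r for some universal constant C > 0. -/
noncomputable section

open MeasureTheory Metric Set
open scoped ENNReal


lemma sep_card (ι : Type*) [Fintype ι] {ρ : ℝ} (hρ : 0 < ρ) (hρ1 : ρ ≤ 1)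
    (T : Finset (EuclideanSpace ℝ ι)) (hT1 : ∀ y ∈ T, ‖y‖ = 1)
    (hsep : ∀ y ∈ T, ∀ z ∈ T, y ≠ z → ρ < dist y z) :
    (T.card : ℝ) ≤ (4 / ρ) ^ (Fintype.card ι) := by
  have hballs : Set.PairwiseDisjoint (T : Set (EuclideanSpace ℝ ι)) (fun y => ball y (ρ/2)) := by
    intro y hy z hz hyz
    exact ball_disjoint_ball (by linarith [hsep y hy z hz hyz])
  have hsum : ∑ y ∈ T, volume (ball y (ρ/2)) = volume (⋃ y ∈ T, ball y (ρ/2)) :=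
    (measure_biUnion_finset hballs (fun y _ => measurableSet_ball)).symm
  have hsub : (⋃ y ∈ T, ball y (ρ/2)) ⊆ ball (0 : EuclideanSpace ℝ ι) 2 := by
    intro w hw
    simp only [mem_iUnion] at hw
    obtain ⟨y, hy, hwy⟩ := hw
    rw [mem_ball] at hwy ⊢
    have h3 : dist w 0 ≤ dist w y + dist y 0 := dist_triangle _ _ _
    have hy0 : dist y 0 = 1 := by rw [dist_zero_right]; exact hT1 y hy
    linarith
  have hvol : ∀ y : EuclideanSpace ℝ ι, volume (ball y (ρ/2)) =
      ENNReal.ofReal ((ρ/2) ^ (Fintype.card ι)) * volume (ball (0 : EuclideanSpace ℝ ι) 1) := by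
    intro y
    rw [Measure.addHaar_ball_of_pos volume y (by linarith), finrank_euclideanSpace]
  have key : (T.card : ℝ≥0∞) * (ENNReal.ofReal ((ρ/2) ^ (Fintype.card ι))
        * volume (ball (0 : EuclideanSpace ℝ ι) 1))
      ≤ ENNReal.ofReal (2 ^ (Fintype.card ι)) * volume (ball (0 : EuclideanSpace ℝ ι) 1) := by
    calc (T.card : ℝ≥0∞) * (ENNReal.ofReal ((ρ/2) ^ (Fintype.card ι))
          * volume (ball (0 : EuclideanSpace ℝ ι) 1))
        = ∑ y ∈ T, volume (ball y (ρ/2)) := by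
          rw [Finset.sum_congr rfl (fun y _ => hvol y), Finset.sum_const, nsmul_eq_mul]
      _ = volume (⋃ y ∈ T, ball y (ρ/2)) := hsum
      _ ≤ volume (ball (0 : EuclideanSpace ℝ ι) 2) := measure_mono hsub
      _ = ENNReal.ofReal (2 ^ (Fintype.card ι)) * volume (ball (0 : EuclideanSpace ℝ ι) 1) := by
          rw [Measure.addHaar_ball_of_pos volume _ (by norm_num), finrank_euclideanSpace]
  have hB0 : volume (ball (0 : EuclideanSpace ℝ ι) 1) ≠ 0 := (measure_ball_pos volume _ one_pos).ne'
  have hBt : volume (ball (0 : EuclideanSpace ℝ ι) 1) ≠ ⊤ := measure_ball_lt_top.ne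
  have h2 : ENNReal.ofReal ((2:ℝ) ^ (Fintype.card ι)) =
      ENNReal.ofReal ((4/ρ)^(Fintype.card ι)) * ENNReal.ofReal ((ρ/2)^(Fintype.card ι)) := by
    rw [← ENNReal.ofReal_mul (by positivity), ← mul_pow]
    congr 1
    congr 1
    field_simp
    ring
  rw [h2] at key
  rw [← mul_assoc] at key
  have key2 := ENNReal.mul_le_mul_iff_left hB0 hBt |>.1 key
  have hpd : ENNReal.ofReal ((ρ/2) ^ (Fintype.card ι)) ≠ 0 := by
    simp [ENNReal.ofReal_eq_zero, not_le]
    positivity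
  have key3 := ENNReal.mul_le_mul_iff_left hpd ENNReal.ofReal_ne_top |>.1 key2
  have := ENNReal.toReal_mono (ENNReal.ofReal_ne_top) key3
  rwa [ENNReal.toReal_natCast, ENNReal.toReal_ofReal (by positivity)] at this

lemma net_sphere (ι : Type*) [Fintype ι] {ρ : ℝ} (hρ : 0 < ρ) (hρ1 : ρ ≤ 1) :
    ∃ T : Finset (EuclideanSpace ℝ ι), (∀ y ∈ T, ‖y‖ = 1) ∧
      (∀ x : EuclideanSpace ℝ ι, ‖x‖ = 1 → ∃ y ∈ T, ‖x - y‖ ≤ ρ) ∧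
      (T.card : ℝ) ≤ (4 / ρ) ^ (Fintype.card ι) := by
  classical
  set P : Finset (EuclideanSpace ℝ ι) → Prop :=
    fun T => (∀ y ∈ T, ‖y‖ = 1) ∧ (∀ y ∈ T, ∀ z ∈ T, y ≠ z → ρ < dist y z) with hP
  set cs : Set ℕ := {n | ∃ T, P T ∧ T.card = n} with hcs
  have hne : cs.Nonempty := ⟨0, ∅, ⟨by simp, by simp⟩, rfl⟩
  have hbdd : BddAbove cs := by
    refine ⟨⌈(4/ρ)^(Fintype.card ι)⌉₊, fun n hn => ?_⟩
    obtain ⟨T, hT, rfl⟩ := hn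
    have := sep_card ι hρ hρ1 T hT.1 hT.2
    exact_mod_cast this.trans (Nat.le_ceil _)
  obtain ⟨T, hT, hTcard⟩ := Nat.sSup_mem hne hbdd
  refine ⟨T, hT.1, ?_, ?_⟩
  · intro x hx
    by_contra hcon
    push_neg at hcon
    have hxT : x ∉ T := fun hxT => by
      have := hcon x hxT
      simp at this
      linarith
    have hins : P (insert x T) := by
      constructor
      · intro y hy
        rcases Finset.mem_insert.1 hy with rfl | hy
        · exact hx
        · exact hT.1 y hy
      · intro y hy z hz hyz
        rcases Finset.mem_insert.1 hy with rfl | hy'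
        · rcases Finset.mem_insert.1 hz with rfl | hz'
          · exact absurd rfl hyz
          · rw [dist_eq_norm]; exact hcon z hz'
        · rcases Finset.mem_insert.1 hz with rfl | hz'
          · rw [dist_comm, dist_eq_norm]; exact hcon y hy'
          · exact hT.2 y hy' z hz' hyz
    have hle : (insert x T).card ≤ sSup cs := le_csSup hbdd ⟨_, hins, rfl⟩
    rw [Finset.card_insert_of_notMem hxT, hTcard] at hle
    omega
  · exact sep_card ι hρ hρ1 T hT.1 hT.2


open Finset in
noncomputable def extFun {N : ℕ} (S : Finset (Fin N)) (x : EuclideanSpace ℝ ↥S) :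
    EuclideanSpace ℝ (Fin N) :=
  WithLp.toLp 2 (fun i => if h : i ∈ S then x ⟨i, h⟩ else 0)

lemma norm_extFun {N : ℕ} (S : Finset (Fin N)) (x : EuclideanSpace ℝ ↥S) :
    ‖extFun S x‖ = ‖x‖ := by
  rw [EuclideanSpace.norm_eq, EuclideanSpace.norm_eq]
  congr 1
  have h1 : ∑ i ∈ S, ‖extFun S x i‖ ^ 2 = ∑ i : Fin N, ‖extFun S x i‖ ^ 2 :=
    Finset.sum_subset (Finset.subset_univ S) (fun i _ hi => by simp [extFun, hi])
  rw [← h1, ← Finset.sum_attach S (fun i => ‖extFun S x i‖ ^ 2), Finset.univ_eq_attach]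
  refine Finset.sum_congr rfl (fun j _ => ?_)
  simp [extFun, j.2]

lemma extFun_sub {N : ℕ} (S : Finset (Fin N)) (a b : EuclideanSpace ℝ ↥S) :
    extFun S (a - b) = extFun S a - extFun S b := by
  ext i
  by_cases h : i ∈ S <;> simp [extFun, h]

lemma support_extFun {N : ℕ} (S : Finset (Fin N)) (x : EuclideanSpace ℝ ↥S) :
    Function.support (extFun S x) ⊆ ↑S := by
  intro i hi
  by_contra h
  rw [Finset.mem_coe] at h
  exact hi (by simp [extFun, h])

lemma extFun_restrict {N : ℕ} (S : Finset (Fin N)) (x : EuclideanSpace ℝ (Fin N))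
    (h : Function.support x ⊆ ↑S) :
    extFun S (WithLp.toLp 2 (fun j : ↥S => x ↑j)) = x := by
  ext i
  by_cases hi : i ∈ S
  · simp [extFun, hi]
  · simp only [extFun, dif_neg hi]
    by_contra h0
    exact hi (h (Function.mem_support.2 (fun hx => h0 hx.symm)))


lemma sum_choose_le_exp (N r : ℕ) (hr : 1 ≤ r) (hrN : r ≤ N) :
    (∑ k ∈ Finset.range (r+1), (N.choose k : ℝ)) ≤ (Real.exp 1 * N / r) ^ r := by
  have hN : (0:ℝ) < N := by exact_mod_cast lt_of_lt_of_le hr hrN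
  have hrpos : (0:ℝ) < r := by exact_mod_cast hr
  set t : ℝ := r / N with ht
  have ht0 : 0 < t := by positivity
  have ht1 : t ≤ 1 := by rw [ht, div_le_one hN]; exact_mod_cast hrN
  have h1 : (∑ k ∈ Finset.range (r+1), (N.choose k : ℝ)) * t ^ r
      ≤ ∑ k ∈ Finset.range (r+1), (N.choose k : ℝ) * t ^ k := by
    rw [Finset.sum_mul]
    refine Finset.sum_le_sum (fun k hk => ?_)
    have hkr : k ≤ r := Nat.lt_succ_iff.1 (Finset.mem_range.1 hk)
    exact mul_le_mul_of_nonneg_left (pow_le_pow_of_le_one ht0.le ht1 hkr) (by positivity)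
  have h2 : ∑ k ∈ Finset.range (r+1), (N.choose k : ℝ) * t ^ k
      ≤ ∑ k ∈ Finset.range (N+1), (N.choose k : ℝ) * t ^ k := by
    refine Finset.sum_le_sum_of_subset_of_nonneg
      (Finset.range_subset_range.2 (by omega)) (fun k _ _ => by positivity)
  have h3 : ∑ k ∈ Finset.range (N+1), (N.choose k : ℝ) * t ^ k = (1 + t) ^ N := by
    rw [add_comm (1:ℝ) t, add_pow]
    refine Finset.sum_congr rfl (fun k _ => ?_)
    ring
  have h4 : (1 + t) ^ N ≤ Real.exp r := by
    have : (1 + t) ^ N ≤ (Real.exp t) ^ N :=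
      pow_le_pow_left₀ (by linarith) (by linarith [Real.add_one_le_exp t]) N
    refine this.trans (le_of_eq ?_)
    rw [← Real.exp_nat_mul, ht]
    congr 1
    field_simp
  have h5 : (∑ k ∈ Finset.range (r+1), (N.choose k : ℝ)) * t ^ r ≤ Real.exp r := by
    calc _ ≤ _ := h1
      _ ≤ _ := h2
      _ = _ := h3
      _ ≤ _ := h4
  have htr : (0:ℝ) < t ^ r := by positivity
  rw [← le_div_iff₀ htr] at h5
  refine h5.trans (le_of_eq ?_)
  rw [div_eq_mul_inv, ← Real.exp_one_pow, ← inv_pow, ← mul_pow]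
  congr 1
  rw [ht]
  field_simp

/-- Existence of support-preserving ρ-nets on r-sparse unit vectors of controlled cardinality. -/
theorem sparse_support_preserving_net :
    ∃ C : ℝ, 0 < C ∧ ∀ (N r : ℕ) (ρ : ℝ), 0 < ρ → ρ ≤ 1 → r ≤ N →
      ∃ 𝒩 : Finset (EuclideanSpace ℝ (Fin N)),
        (∀ y ∈ 𝒩, ‖y‖ = 1 ∧ (Function.support y).ncard ≤ r) ∧
        (∀ x : EuclideanSpace ℝ (Fin N), ‖x‖ = 1 → (Function.support x).ncard ≤ r →
          ∃ y ∈ 𝒩, Function.support y ⊆ Function.support x ∧ ‖x - y‖ ≤ ρ) ∧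
        (𝒩.card : ℝ) ≤ (C * N / (ρ * r)) ^ r := by
  classical
  refine ⟨11, by norm_num, fun N r ρ hρ hρ1 hrN => ?_⟩
  rcases Nat.eq_zero_or_pos r with rfl | hr
  · refine ⟨∅, by simp, ?_, by norm_num⟩
    intro x hx hsupp
    exfalso
    have hfin : (Function.support x).Finite := Set.toFinite _
    have : Function.support x = ∅ := by
      rw [← Set.ncard_eq_zero hfin]
      omega
    rw [Function.support_eq_empty_iff] at this
    rw [show x = 0 from by ext i; exact congrFun this i] at hx
    simp at hx
  · -- main case
    choose T hT1 hT2 hT3 using fun S : Finset (Fin N) => net_sphere (↥S) hρ hρ1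
    set A : Finset (Finset (Fin N)) := Finset.univ.filter (fun S => S.card ≤ r) with hA
    refine ⟨A.biUnion (fun S => (T S).image (extFun S)), ?_, ?_, ?_⟩
    · intro y hy
      obtain ⟨S, hS, hy⟩ := Finset.mem_biUnion.1 hy
      obtain ⟨t, ht, rfl⟩ := Finset.mem_image.1 hy
      refine ⟨by rw [norm_extFun]; exact hT1 S t ht, ?_⟩
      have h1 : (Function.support (extFun S t)).ncard ≤ (↑S : Set (Fin N)).ncard :=
        Set.ncard_le_ncard (support_extFun S t) (Set.toFinite _)
      rw [Set.ncard_coe_finset] at h1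
      exact h1.trans (Finset.mem_filter.1 hS).2
    · intro x hx hsupp
      set S : Finset (Fin N) := (Function.support x).toFinset with hS
      have hcoe : (↑S : Set (Fin N)) = Function.support x := Set.coe_toFinset _
      have hScard : S.card ≤ r := by
        rw [← Set.ncard_coe_finset, hcoe]; exact hsupp
      have hSA : S ∈ A := Finset.mem_filter.2 ⟨Finset.mem_univ _, hScard⟩
      set u : EuclideanSpace ℝ ↥S := WithLp.toLp 2 (fun j : ↥S => x ↑j) with hu
      have hre : extFun S u = x := extFun_restrict S x (by rw [hcoe])
      have hun : ‖u‖ = 1 := by rw [← norm_extFun S u, hre]; exact hx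
      obtain ⟨t, ht, htd⟩ := hT2 S u hun
      refine ⟨extFun S t, Finset.mem_biUnion.2 ⟨S, hSA,
        Finset.mem_image.2 ⟨t, ht, rfl⟩⟩, ?_, ?_⟩
      · rw [← hcoe]; exact support_extFun S t
      · rw [← hre, ← extFun_sub, norm_extFun]
        exact htd
    · -- cardinality bound
      have hb1 : ((A.biUnion (fun S => (T S).image (extFun S))).card : ℝ)
          ≤ ∑ S ∈ A, ((T S).card : ℝ) := by
        have := Finset.card_biUnion_le (s := A) (t := fun S => (T S).image (extFun S))
        have h2 : ∑ S ∈ A, ((T S).image (extFun S)).card ≤ ∑ S ∈ A, (T S).card :=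
          Finset.sum_le_sum (fun S _ => Finset.card_image_le)
        exact_mod_cast this.trans h2
      have hρ4 : (1:ℝ) ≤ 4 / ρ := by rw [le_div_iff₀ hρ]; linarith
      have hb2 : ∑ S ∈ A, ((T S).card : ℝ) ≤ (A.card : ℝ) * (4/ρ) ^ r := by
        calc ∑ S ∈ A, ((T S).card : ℝ) ≤ ∑ S ∈ A, (4/ρ) ^ r := by
              refine Finset.sum_le_sum (fun S hS => ?_)
              refine (hT3 S).trans ?_
              rw [Fintype.card_coe]
              exact pow_le_pow_right₀ (by linarith) (Finset.mem_filter.1 hS).2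
          _ = (A.card : ℝ) * (4/ρ) ^ r := by rw [Finset.sum_const, nsmul_eq_mul]
      have hAcard : (A.card : ℝ) ≤ ∑ k ∈ Finset.range (r+1), (N.choose k : ℝ) := by
        have hsub : A ⊆ (Finset.range (r+1)).biUnion
            (fun k => Finset.powersetCard k (Finset.univ : Finset (Fin N))) := by
          intro S hS
          refine Finset.mem_biUnion.2 ⟨S.card, Finset.mem_range.2 ?_, ?_⟩
          · exact Nat.lt_succ_of_le (Finset.mem_filter.1 hS).2
          · exact Finset.mem_powersetCard.2 ⟨Finset.subset_univ _, rfl⟩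
        have := (Finset.card_le_card hsub).trans Finset.card_biUnion_le
        have heq : ∀ k, (Finset.powersetCard k (Finset.univ : Finset (Fin N))).card
            = N.choose k := by
          intro k
          rw [Finset.card_powersetCard, Finset.card_univ, Fintype.card_fin]
        push_cast
        calc (A.card : ℝ) ≤ (∑ k ∈ Finset.range (r+1),
              (Finset.powersetCard k (Finset.univ : Finset (Fin N))).card : ℕ) := by
              exact_mod_cast this
          _ = ∑ k ∈ Finset.range (r+1), (N.choose k : ℝ) := by
              push_cast
              exact Finset.sum_congr rfl (fun k _ => by rw [heq k])
      have hsum := sum_choose_le_exp N r hr hrN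
      have hNpos : (0:ℝ) < N := by
        have : 0 < N := lt_of_lt_of_le hr hrN
        exact_mod_cast this
      have hrpos : (0:ℝ) < r := by exact_mod_cast hr
      have hfinal : (Real.exp 1 * N / r) ^ r * (4/ρ) ^ r ≤ (11 * N / (ρ * r)) ^ r := by
        rw [← mul_pow]
        refine pow_le_pow_left₀ (by positivity) ?_ r
        have he : Real.exp 1 ≤ 2.7182818286 := Real.exp_one_lt_d9.le
        have h1 : Real.exp 1 * N / r * (4/ρ) = (4 * Real.exp 1) * (N / (ρ * r)) := by
          field_simp
        have h2 : 11 * (N:ℝ) / (ρ * r) = 11 * (N / (ρ * r)) := by ring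
        rw [h1, h2]
        refine mul_le_mul_of_nonneg_right (by linarith) (by positivity)
      calc ((A.biUnion (fun S => (T S).image (extFun S))).card : ℝ)
          ≤ ∑ S ∈ A, ((T S).card : ℝ) := hb1
        _ ≤ (A.card : ℝ) * (4/ρ) ^ r := hb2
        _ ≤ (∑ k ∈ Finset.range (r+1), (N.choose k : ℝ)) * (4/ρ) ^ r := by
            refine mul_le_mul_of_nonneg_right hAcard (by positivity)
        _ ≤ (Real.exp 1 * N / r) ^ r * (4/ρ) ^ r := by
            refine mul_le_mul_of_nonneg_right hsum (by positivity)
        _ ≤ (11 * N / (ρ * r)) ^ r := hfinal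
end
end

section
/- Let ρ ∈ (0,1], r, h, p, q ∈ ℕ with r ≥ 2, and let 𝒩 be a support-preserving Euclidean ρ-net on the set of h-sparse unit vectors in ℝ^q. Let T be any p×q real matrix. Then sup over h-sparse unit vectors u of the r-th largest coordinate of |Tu| is at most 2 · sup over v ∈ 𝒩 of the ⌊r/2⌋-th largest coordinate of |Tv|, plus (4ρ/√r) · sup over h-sparse unit vectors u of (Σ_{i=1}^{r} (i-th largest coordinate of |Tu|)²)^{1/2}. -/
noncomputable section

/-- The `m`-th largest value (1-based) among the values of `a`. -/
noncomputable def kthLargest {ι : Type*} [Fintype ι] (a : ι → ℝ) (m : ℕ) : ℝ :=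
  (((Finset.univ.val.map a).sort (· ≤ ·)).reverse).getD (m - 1) 0

namespace KLAux

variable {ι : Type*} [Fintype ι]

def rList (a : ι → ℝ) : List ℝ := ((Finset.univ.val.map a).sort (· ≤ ·)).reverse

lemma kth_eq (a : ι → ℝ) (m : ℕ) : kthLargest a m = (rList a).getD (m - 1) 0 := rfl

lemma rList_sorted (a : ι → ℝ) : (rList a).Pairwise (fun x y => y ≤ x) := by
  rw [rList, List.pairwise_reverse]
  exact Multiset.pairwise_sort _ _

lemma rList_length (a : ι → ℝ) : (rList a).length = Fintype.card ι := by
  rw [rList, List.length_reverse, Multiset.length_sort, Multiset.card_map, ← Finset.card_def,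
    Finset.card_univ]

lemma rList_countP (a : ι → ℝ) (p : ℝ → Prop) [DecidablePred p] :
    (rList a).countP (fun x => decide (p x)) = (Finset.univ.filter (fun i => p (a i))).card := by
  rw [rList, (List.reverse_perm _).countP_eq]
  have h1 : (Multiset.sort (Finset.univ.val.map a) (· ≤ ·) : List ℝ).countP (fun x => decide (p x))
      = Multiset.countP p (↑(Multiset.sort (Finset.univ.val.map a) (· ≤ ·)) : Multiset ℝ) := by
    rw [Multiset.coe_countP]
  rw [h1, Multiset.sort_eq, Multiset.countP_map]
  rw [Finset.card_filter, Finset.sum]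
  simp [Multiset.countP_eq_card_filter, Multiset.card_map]
  congr 1

lemma rList_mem (a : ι → ℝ) {x : ℝ} (hx : x ∈ rList a) : ∃ i, a i = x := by
  rw [rList, List.mem_reverse, ← Multiset.mem_coe, Multiset.sort_eq, Multiset.mem_map] at hx
  obtain ⟨i, _, hi⟩ := hx
  exact ⟨i, hi⟩

end KLAux

open KLAux

lemma kthLargest_le {ι : Type*} [Fintype ι] (a : ι → ℝ) {m : ℕ} (hm : 1 ≤ m) {t : ℝ}
    (ht : 0 ≤ t) (hc : (Finset.univ.filter (fun i => t < a i)).card ≤ m - 1) :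
    kthLargest a m ≤ t := by
  rw [kth_eq]
  set l := rList a with hl
  by_cases hlen : m - 1 < l.length
  · rw [List.getD_eq_getElem l 0 hlen]
    by_contra hgt
    push_neg at hgt
    -- all of take m are > t
    have hmlen : m ≤ l.length := by omega
    have htake : ∀ x ∈ l.take m, t < x := by
      intro x hx
      rw [List.mem_iff_getElem] at hx
      obtain ⟨k, hk, hkx⟩ := hx
      rw [List.length_take] at hk
      have hk' : k < m := lt_of_lt_of_le hk (min_le_left _ _)
      have hk'' : k < l.length := by omega
      rw [List.getElem_take] at hkx
      have hrel : l[m-1] ≤ l[k] := by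
        have := (rList_sorted a).rel_get_of_le (a := ⟨k, by rw [hl] at hk''; exact hk''⟩)
          (b := ⟨m - 1, by rw [hl] at hlen; exact hlen⟩) (by simp; omega)
        simpa [List.get_eq_getElem, ← hl] using this
      rw [← hkx]
      exact lt_of_lt_of_le hgt hrel
    have hcount : m ≤ l.countP (fun x => decide (t < x)) := by
      have h1 : (l.take m).countP (fun x => decide (t < x)) = m := by
        rw [List.countP_eq_length.mpr (by intro x hx; simpa using htake x hx)]
        rw [List.length_take]; omega
      calc m = (l.take m).countP (fun x => decide (t < x)) := h1.symm
        _ ≤ l.countP (fun x => decide (t < x)) := by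
            conv_rhs => rw [← List.take_append_drop m l]
            rw [List.countP_append]; omega
    rw [hl, rList_countP] at hcount
    omega
  · rw [List.getD_eq_default l 0 (by omega)]
    exact ht

lemma filter_card_kthLargest_le {ι : Type*} [Fintype ι] (a : ι → ℝ) (m : ℕ) :
    (Finset.univ.filter (fun i => kthLargest a m < a i)).card ≤ m - 1 := by
  rw [← rList_countP]
  set l := rList a with hl
  by_cases hlen : m - 1 < l.length
  · have hkth : kthLargest a m = l[m-1] := by rw [kth_eq, List.getD_eq_getElem l 0 hlen]
    have hdrop : (l.drop (m-1)).countP (fun x => decide (kthLargest a m < x)) = 0 := by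
      rw [List.countP_eq_zero]
      intro x hx
      rw [List.mem_iff_getElem] at hx
      obtain ⟨k, hk, hkx⟩ := hx
      rw [List.length_drop] at hk
      have hk2 : m - 1 + k < l.length := by omega
      rw [List.getElem_drop] at hkx
      have hrel : l[m-1+k] ≤ l[m-1] := by
        have := (rList_sorted a).rel_get_of_le (a := ⟨m-1, by rw [hl] at hlen; exact hlen⟩)
          (b := ⟨m-1+k, by rw [hl] at hk2; exact hk2⟩) (by simp)
        simpa [List.get_eq_getElem, ← hl] using this
      simp only [decide_eq_true_eq]
      rw [← hkx, hkth]
      exact not_lt.mpr hrel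
    conv_lhs => rw [← List.take_append_drop (m-1) l, List.countP_append]
    rw [hdrop]
    have := List.countP_le_length (l := l.take (m-1)) (p := fun x => decide (kthLargest a m < x))
    rw [List.length_take] at this
    omega
  · have h1 : l.countP (fun x => decide (kthLargest a m < x)) ≤ l.length :=
      List.countP_le_length
    omega

lemma kthLargest_nonneg {ι : Type*} [Fintype ι] {a : ι → ℝ} (ha : ∀ i, 0 ≤ a i) (m : ℕ) :
    0 ≤ kthLargest a m := by
  rw [kth_eq]
  by_cases hlen : m - 1 < (rList a).length
  · rw [List.getD_eq_getElem _ 0 hlen]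
    obtain ⟨i, hi⟩ := rList_mem a (List.getElem_mem hlen)
    rw [← hi]; exact ha i
  · rw [List.getD_eq_default _ 0 (by omega)]

lemma kthLargest_antitone {ι : Type*} [Fintype ι] {a : ι → ℝ} (ha : ∀ i, 0 ≤ a i)
    {m m' : ℕ} (hm : 1 ≤ m) (hmm : m ≤ m') : kthLargest a m' ≤ kthLargest a m := by
  by_cases hlen : m' - 1 < (rList a).length
  · have hlen2 : m - 1 < (rList a).length := by omega
    rw [kth_eq, kth_eq, List.getD_eq_getElem _ 0 hlen, List.getD_eq_getElem _ 0 hlen2]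
    have := (rList_sorted a).rel_get_of_le (a := ⟨m-1, hlen2⟩) (b := ⟨m'-1, hlen⟩)
      (by simp; omega)
    simpa [List.get_eq_getElem] using this
  · rw [kth_eq (m := m'), List.getD_eq_default _ 0 (by omega)]
    exact kthLargest_nonneg ha m

lemma kthLargest_le_of_forall_le {ι : Type*} [Fintype ι] {a : ι → ℝ} {C : ℝ} (hC : 0 ≤ C)
    (h : ∀ i, a i ≤ C) {m : ℕ} (hm : 1 ≤ m) : kthLargest a m ≤ C := by
  apply kthLargest_le a hm hC
  have : (Finset.univ.filter (fun i => C < a i)) = ∅ := by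
    apply Finset.filter_eq_empty_iff.mpr
    intro i _
    exact not_lt.mpr (h i)
  rw [this]; simp

lemma kthLargest_smul_le {ι : Type*} [Fintype ι] (a : ι → ℝ) {c : ℝ} (hc : 0 ≤ c)
    {m : ℕ} (hm : 1 ≤ m) (ha : ∀ i, 0 ≤ a i) :
    kthLargest (fun i => c * a i) m ≤ c * kthLargest a m := by
  apply kthLargest_le _ hm (mul_nonneg hc (kthLargest_nonneg ha m))
  calc (Finset.univ.filter (fun i => c * kthLargest a m < c * a i)).card
      ≤ (Finset.univ.filter (fun i => kthLargest a m < a i)).card := by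
        apply Finset.card_le_card
        intro i hi
        simp only [Finset.mem_filter, Finset.mem_univ, true_and] at hi ⊢
        by_contra hle
        push_neg at hle
        exact absurd (mul_le_mul_of_nonneg_left hle hc) (not_le.mpr hi)
    _ ≤ m - 1 := filter_card_kthLargest_le a m

lemma kthLargest_add_le {ι : Type*} [Fintype ι] (a b c : ι → ℝ) (hab : ∀ i, c i ≤ a i + b i)
    (ha : ∀ i, 0 ≤ a i) (hb : ∀ i, 0 ≤ b i) {k m m' : ℕ} (hm : 1 ≤ m) (hm' : 1 ≤ m')
    (hk : m + m' = k + 1) :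
    kthLargest c k ≤ kthLargest a m + kthLargest b m' := by
  classical
  apply kthLargest_le _ (by omega) (add_nonneg (kthLargest_nonneg ha m) (kthLargest_nonneg hb m'))
  calc (Finset.univ.filter (fun i => kthLargest a m + kthLargest b m' < c i)).card
      ≤ ((Finset.univ.filter (fun i => kthLargest a m < a i)) ∪
          (Finset.univ.filter (fun i => kthLargest b m' < b i))).card := by
        apply Finset.card_le_card
        intro i hi
        simp only [Finset.mem_filter, Finset.mem_univ, true_and, Finset.mem_union] at hi ⊢
        by_contra hcon
        push_neg at hcon
        have := hab i
        nlinarith [hcon.1, hcon.2]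
    _ ≤ (Finset.univ.filter (fun i => kthLargest a m < a i)).card +
          (Finset.univ.filter (fun i => kthLargest b m' < b i)).card := Finset.card_union_le _ _
    _ ≤ k - 1 := by
        have h1 := filter_card_kthLargest_le a m
        have h2 := filter_card_kthLargest_le b m'
        omega

lemma kthLargest_le_sqrt_sum {ι : Type*} [Fintype ι] {a : ι → ℝ} (ha : ∀ i, 0 ≤ a i) {j r : ℕ}
    (hj1 : 1 ≤ j) (hjr : j ≤ r) (hrj : r ≤ 4 * j) (hr1 : 1 ≤ r) :
    kthLargest a j ≤ (2 / Real.sqrt r) * Real.sqrt (∑ i ∈ Finset.Icc 1 r, (kthLargest a i)^2) := by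
  set Ssum := ∑ i ∈ Finset.Icc 1 r, (kthLargest a i)^2 with hSdef
  have hS0 : 0 ≤ Ssum := Finset.sum_nonneg fun i _ => sq_nonneg _
  have hkey : (j : ℝ) * (kthLargest a j)^2 ≤ Ssum := by
    have h1 : ∑ _i ∈ Finset.Icc 1 j, (kthLargest a j)^2
        ≤ ∑ i ∈ Finset.Icc 1 j, (kthLargest a i)^2 := by
      apply Finset.sum_le_sum
      intro i hi
      rw [Finset.mem_Icc] at hi
      have h1' := kthLargest_antitone ha hi.1 hi.2
      have h0 := kthLargest_nonneg ha j
      nlinarith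
    have h2 : ∑ i ∈ Finset.Icc 1 j, (kthLargest a i)^2 ≤ Ssum := by
      apply Finset.sum_le_sum_of_subset_of_nonneg (Finset.Icc_subset_Icc_right hjr)
      intro i _ _; exact sq_nonneg _
    rw [Finset.sum_const, Nat.card_Icc, Nat.add_sub_cancel, nsmul_eq_mul] at h1
    exact le_trans h1 h2
  have hr0 : (0:ℝ) < r := by exact_mod_cast Nat.lt_of_lt_of_le Nat.zero_lt_one hr1
  have hsr : 0 < Real.sqrt r := Real.sqrt_pos.mpr hr0
  rw [div_mul_eq_mul_div, le_div_iff₀ hsr]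
  have he1 : kthLargest a j * Real.sqrt r = Real.sqrt ((kthLargest a j)^2 * r) := by
    rw [Real.sqrt_mul (sq_nonneg _), Real.sqrt_sq (kthLargest_nonneg ha j)]
  have he2 : 2 * Real.sqrt Ssum = Real.sqrt (4 * Ssum) := by
    rw [show (4:ℝ) = 2^2 by norm_num, Real.sqrt_mul (by positivity), Real.sqrt_sq (by norm_num)]
  rw [he1, he2]
  apply Real.sqrt_le_sqrt
  have hj4 : (r:ℝ) ≤ 4 * (j:ℝ) := by exact_mod_cast hrj
  nlinarith [sq_nonneg (kthLargest a j), hkey,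
    mul_nonneg (sub_nonneg.mpr hj4) (sq_nonneg (kthLargest a j))]

lemma euclid_coord_le {n : ℕ} (u : EuclideanSpace ℝ (Fin n)) (j : Fin n) : |u j| ≤ ‖u‖ := by
  rw [EuclideanSpace.norm_eq]
  rw [show |u j| = Real.sqrt (‖u j‖^2) by
    rw [Real.sqrt_sq_eq_abs, Real.norm_eq_abs, abs_abs]]
  apply Real.sqrt_le_sqrt
  exact Finset.single_le_sum (f := fun i => ‖u i‖^2) (fun i _ => sq_nonneg _) (Finset.mem_univ j)


/-- Passing from the supremum of order statistics over sparse unit vectors to a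
support-preserving net. -/
theorem order_statistics_net {p q : ℕ} (r h : ℕ) (hr : 2 ≤ r)
    (ρ : ℝ) (hρ0 : 0 < ρ) (hρ1 : ρ ≤ 1)
    (T : Matrix (Fin p) (Fin q) ℝ)
    (𝒩 : Set (EuclideanSpace ℝ (Fin q)))
    (h𝒩 : ∀ v ∈ 𝒩, ‖v‖ = 1 ∧ (Function.support v).ncard ≤ h)
    (hnet : ∀ u : EuclideanSpace ℝ (Fin q), ‖u‖ = 1 → (Function.support u).ncard ≤ h →
      ∃ v ∈ 𝒩, Function.support v ⊆ Function.support u ∧ ‖u - v‖ ≤ ρ) :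
    (⨆ u : {u : EuclideanSpace ℝ (Fin q) // ‖u‖ = 1 ∧ (Function.support u).ncard ≤ h},
        kthLargest (fun i : Fin p => |T.mulVec (fun j => u.1 j) i|) r)
      ≤ 2 * (⨆ v : 𝒩, kthLargest (fun i : Fin p => |T.mulVec (fun j => v.1 j) i|) (r / 2))
        + (4 * ρ / Real.sqrt r) *
          ⨆ u : {u : EuclideanSpace ℝ (Fin q) // ‖u‖ = 1 ∧ (Function.support u).ncard ≤ h},
            Real.sqrt (∑ i ∈ Finset.Icc 1 r,
              (kthLargest (fun l : Fin p => |T.mulVec (fun j => u.1 j) l|) i) ^ 2) := by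
  classical
  have hAnn : ∀ (x : Fin q → ℝ) (i : Fin p), (0:ℝ) ≤ |T.mulVec x i| := fun x i => abs_nonneg _
  set C : ℝ := ∑ i : Fin p, ∑ j : Fin q, |T i j| with hCdef
  have hC0 : 0 ≤ C := by positivity
  have hcoord : ∀ (u : EuclideanSpace ℝ (Fin q)), ‖u‖ ≤ 1 → ∀ i : Fin p,
      |T.mulVec (fun j => u j) i| ≤ C := by
    intro u hu i
    have h1 : |T.mulVec (fun j => u j) i| ≤ ∑ j : Fin q, |T i j * u j| := by
      rw [show T.mulVec (fun j => u j) i = ∑ j : Fin q, T i j * u j by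
        simp [Matrix.mulVec, dotProduct]]
      exact Finset.abs_sum_le_sum_abs _ _
    have h2 : ∑ j : Fin q, |T i j * u j| ≤ ∑ j : Fin q, |T i j| := by
      apply Finset.sum_le_sum
      intro j _
      rw [abs_mul]
      have := le_trans (euclid_coord_le u j) hu
      nlinarith [abs_nonneg (T i j), abs_nonneg (u j)]
    have h3 : ∑ j : Fin q, |T i j| ≤ C := by
      rw [hCdef]
      exact Finset.single_le_sum (f := fun i' => ∑ j : Fin q, |T i' j|)
        (fun i' _ => Finset.sum_nonneg fun j _ => abs_nonneg _) (Finset.mem_univ i)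
    linarith
  set S1 : ℝ := ⨆ v : 𝒩, kthLargest (fun i : Fin p => |T.mulVec (fun j => v.1 j) i|) (r / 2)
    with hS1def
  set S2 : ℝ := ⨆ u : {u : EuclideanSpace ℝ (Fin q) // ‖u‖ = 1 ∧ (Function.support u).ncard ≤ h},
      Real.sqrt (∑ i ∈ Finset.Icc 1 r,
        (kthLargest (fun l : Fin p => |T.mulVec (fun j => u.1 j) l|) i) ^ 2) with hS2def
  have hbdd1 : BddAbove (Set.range (fun v : 𝒩 =>
      kthLargest (fun i : Fin p => |T.mulVec (fun j => v.1 j) i|) (r / 2))) := by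
    refine ⟨C, ?_⟩
    rintro x ⟨v, rfl⟩
    exact kthLargest_le_of_forall_le hC0
      (fun i => hcoord v.1 (le_of_eq (h𝒩 v.1 v.2).1) i) (by omega)
  have hbdd2 : BddAbove (Set.range
      (fun u : {u : EuclideanSpace ℝ (Fin q) // ‖u‖ = 1 ∧ (Function.support u).ncard ≤ h} =>
      Real.sqrt (∑ i ∈ Finset.Icc 1 r,
        (kthLargest (fun l : Fin p => |T.mulVec (fun j => u.1 j) l|) i) ^ 2))) := by
    refine ⟨Real.sqrt (r * C^2), ?_⟩
    rintro x ⟨u, rfl⟩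
    apply Real.sqrt_le_sqrt
    have hb : ∀ i ∈ Finset.Icc 1 r,
        (kthLargest (fun l : Fin p => |T.mulVec (fun j => u.1 j) l|) i) ^ 2 ≤ C^2 := by
      intro i hi
      rw [Finset.mem_Icc] at hi
      have hle := kthLargest_le_of_forall_le hC0
        (fun l => hcoord u.1 (le_of_eq u.2.1) l) hi.1
      have hnn := kthLargest_nonneg (fun l => hAnn (fun j => u.1 j) l) i
      nlinarith
    calc ∑ i ∈ Finset.Icc 1 r,
          (kthLargest (fun l : Fin p => |T.mulVec (fun j => u.1 j) l|) i) ^ 2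
        ≤ ∑ _i ∈ Finset.Icc 1 r, C^2 := Finset.sum_le_sum hb
      _ = r * C^2 := by rw [Finset.sum_const, Nat.card_Icc, Nat.add_sub_cancel, nsmul_eq_mul]
  have hS1nn : 0 ≤ S1 := Real.iSup_nonneg fun v =>
    kthLargest_nonneg (fun i => hAnn (fun j => v.1 j) i) _
  have hS2nn : 0 ≤ S2 := Real.iSup_nonneg fun u => Real.sqrt_nonneg _
  have hsr0 : (0:ℝ) < Real.sqrt r := Real.sqrt_pos.mpr (by positivity)
  apply Real.iSup_le _ (by positivity)
  intro u
  obtain ⟨v, hvN, hsupp, hdist⟩ := hnet u.1 u.2.1 u.2.2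
  have hS1v : kthLargest (fun i : Fin p => |T.mulVec (fun j => v j) i|) (r / 2) ≤ S1 :=
    le_ciSup hbdd1 (⟨v, hvN⟩ : 𝒩)
  by_cases huv : u.1 = v
  · have hfun : (fun j => (u.1 : EuclideanSpace ℝ (Fin q)) j) = (fun j => v j) := by
      funext j; rw [huv]
    have h1 : kthLargest (fun i : Fin p => |T.mulVec (fun j => v j) i|) r
        ≤ kthLargest (fun i : Fin p => |T.mulVec (fun j => v j) i|) (r / 2) :=
      kthLargest_antitone (fun i => hAnn _ i) (by omega) (Nat.div_le_self r 2)
    have hterm2 : 0 ≤ (4 * ρ / Real.sqrt r) * S2 := by positivity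
    rw [hfun]
    linarith
  · have hne : u.1 - v ≠ 0 := sub_ne_zero.mpr huv
    set ρ' : ℝ := ‖u.1 - v‖ with hρ'def
    have hρ'0 : 0 < ρ' := norm_pos_iff.mpr hne
    set w : EuclideanSpace ℝ (Fin q) := ρ'⁻¹ • (u.1 - v) with hwdef
    have hwcoord : ∀ j, w j = ρ'⁻¹ * (u.1 j - v j) := fun j => rfl
    have hwnorm : ‖w‖ = 1 := by
      rw [hwdef, norm_smul]
      simp [hρ'def]
      field_simp
    have hwsupp : Function.support w ⊆ Function.support u.1 := by
      intro x hx
      rw [Function.mem_support] at hx ⊢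
      intro hu0
      by_cases hv0 : v x = 0
      · apply hx
        rw [hwcoord, hu0, hv0]; ring
      · exact absurd hu0 (Function.mem_support.mp (hsupp (Function.mem_support.mpr hv0)))
    have hwcard : (Function.support w).ncard ≤ h :=
      le_trans (Set.ncard_le_ncard hwsupp (Set.toFinite _)) u.2.2
    have hxy : (fun j => u.1 j) = (fun j => v j) + ρ' • (fun j => w j) := by
      funext j
      simp only [Pi.add_apply, Pi.smul_apply, smul_eq_mul, hwcoord]
      field_simp
      ring
    have hmv : ∀ i, T.mulVec (fun j => u.1 j) i
        = T.mulVec (fun j => v j) i + ρ' * T.mulVec (fun j => w j) i := by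
      intro i
      rw [hxy, Matrix.mulVec_add, Matrix.mulVec_smul]
      simp
    have hdecomp : ∀ i : Fin p, |T.mulVec (fun j => u.1 j) i|
        ≤ |T.mulVec (fun j => v j) i| + ρ' * |T.mulVec (fun j => w j) i| := by
      intro i
      rw [hmv i]
      calc |T.mulVec (fun j => v j) i + ρ' * T.mulVec (fun j => w j) i|
          ≤ |T.mulVec (fun j => v j) i| + |ρ' * T.mulVec (fun j => w j) i| := abs_add_le _ _
        _ = |T.mulVec (fun j => v j) i| + ρ' * |T.mulVec (fun j => w j) i| := by
            rw [abs_mul, abs_of_pos hρ'0]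
    set j0 : ℕ := r - r / 2 + 1 with hj0def
    have step1 : kthLargest (fun i : Fin p => |T.mulVec (fun j => u.1 j) i|) r
        ≤ kthLargest (fun i : Fin p => |T.mulVec (fun j => v j) i|) (r / 2)
          + kthLargest (fun i : Fin p => ρ' * |T.mulVec (fun j => w j) i|) j0 :=
      kthLargest_add_le _ _ _ hdecomp (fun i => hAnn _ i)
        (fun i => mul_nonneg hρ'0.le (hAnn _ i)) (by omega) (by omega) (by omega)
    have step2 : kthLargest (fun i : Fin p => ρ' * |T.mulVec (fun j => w j) i|) j0
        ≤ ρ' * kthLargest (fun i : Fin p => |T.mulVec (fun j => w j) i|) j0 :=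
      kthLargest_smul_le _ hρ'0.le (by omega) (fun i => hAnn _ i)
    have step3 : kthLargest (fun i : Fin p => |T.mulVec (fun j => w j) i|) j0
        ≤ (2 / Real.sqrt r) * Real.sqrt (∑ i ∈ Finset.Icc 1 r,
            (kthLargest (fun l : Fin p => |T.mulVec (fun j => w j) l|) i) ^ 2) :=
      kthLargest_le_sqrt_sum (fun i => hAnn _ i) (by omega) (by omega) (by omega) (by omega)
    have step4 : Real.sqrt (∑ i ∈ Finset.Icc 1 r,
        (kthLargest (fun l : Fin p => |T.mulVec (fun j => w j) l|) i) ^ 2) ≤ S2 :=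
      le_ciSup hbdd2 (⟨w, hwnorm, hwcard⟩ :
        {u : EuclideanSpace ℝ (Fin q) // ‖u‖ = 1 ∧ (Function.support u).ncard ≤ h})
    have hfinal : ρ' * kthLargest (fun i : Fin p => |T.mulVec (fun j => w j) i|) j0
        ≤ (4 * ρ / Real.sqrt r) * S2 := by
      have h1 : ρ' * kthLargest (fun i : Fin p => |T.mulVec (fun j => w j) i|) j0
          ≤ ρ * ((2 / Real.sqrt r) * S2) := by
        apply mul_le_mul hdist (le_trans step3 ?_) ?_ hρ0.le
        · exact mul_le_mul_of_nonneg_left step4 (by positivity)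
        · exact kthLargest_nonneg (fun i => hAnn _ i) j0
      have h2 : ρ * ((2 / Real.sqrt r) * S2) ≤ (4 * ρ / Real.sqrt r) * S2 := by
        rw [show ρ * ((2 / Real.sqrt r) * S2) = (2 * ρ / Real.sqrt r) * S2 by ring]
        apply mul_le_mul_of_nonneg_right _ hS2nn
        exact (div_le_div_iff_of_pos_right hsr0).mpr (by linarith)
      linarith
    linarith [hS1v, step1, step2, hfinal, hS1nn]
end
end
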